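/- Define G(s) = σ²cos(sν) - σν sin(sν) + ν²e^{sσ} for fixed σ, ν > 0. Then G(s) < G(0) for all s < 0. -/

import Mathlib

open Real

private lemma expUB (y : ℝ) (hy : 0 ≤ y) (hy1 : y ≤ 1) :
    Real.exp (-y) ≤ 1 - y + y ^ 2 / 2 - y ^ 3 / 6 + y ^ 4 * (5 / 96) := by
  have h := Real.exp_bound (x := -y) (by rw [abs_neg, abs_of_nonneg hy]; exact hy1)
    (n := 4) (by norm_num)
  rw [abs_neg, abs_of_nonneg hy] at h
  have hs : ∑ m ∈ Finset.range 4, (-y) ^ m / (m.factorial : ℝ)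
      = 1 - y + y ^ 2 / 2 - y ^ 3 / 6 := by
    norm_num [Finset.sum_range_succ, Nat.factorial]
    ring
  rw [hs] at h
  have h2 := (abs_le.mp h).2
  norm_num [Nat.factorial] at h2
  linarith

private lemma cosUB (x : ℝ) (hx : 0 ≤ x) (hx1 : x ≤ 1) :
    Real.cos x ≤ 1 - x ^ 2 / 2 + x ^ 4 * (5 / 96) := by
  have h := Real.cos_bound (x := x) (by rw [abs_of_nonneg hx]; exact hx1)
  rw [abs_of_nonneg hx] at h
  linarith [(abs_le.mp h).2]

private lemma sinUB (x : ℝ) (hx : 0 ≤ x) (hx1 : x ≤ 1) :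
    Real.sin x ≤ x - x ^ 3 / 6 + x ^ 4 * (5 / 96) := by
  have h := Real.sin_bound (x := x) (by rw [abs_of_nonneg hx]; exact hx1)
  rw [abs_of_nonneg hx] at h
  nlinarith [(abs_le.mp h).2, mul_le_mul_of_nonneg_left hx1 (pow_nonneg hx 4), pow_nonneg hx 4]

private lemma caseB (σ ν t : ℝ) (hσ : 0 < σ) (hν : 0 < ν) (ht : 0 < t)
    (h1 : t * ν ≤ 1) (h2 : t * σ ≤ 1) :
    σ ^ 2 * Real.cos (t * ν) + σ * ν * Real.sin (t * ν) + ν ^ 2 * Real.exp (-(t * σ))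
      < σ ^ 2 + ν ^ 2 := by
  have hx : 0 ≤ t * ν := by positivity
  have hy : 0 ≤ t * σ := by positivity
  have hc := cosUB (t * ν) hx h1
  have hs := sinUB (t * ν) hx h1
  have he := expUB (t * σ) hy h2
  have a1 : t * σ * ν ^ 2 ≤ ν ^ 2 := by nlinarith [sq_nonneg ν]
  have a2 : t * ν ^ 3 ≤ ν ^ 2 := by nlinarith [sq_nonneg ν]
  have a3 : t * σ ^ 3 ≤ σ ^ 2 := by nlinarith [sq_nonneg σ]
  have hk : (5:ℝ)/96 * (t * (σ * ν ^ 2 + ν ^ 3 + σ ^ 3)) < 1/6 * (σ ^ 2 + ν ^ 2) := by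
    nlinarith
  have hp : 0 < t ^ 3 * σ * ν ^ 2 := by positivity
  nlinarith [mul_lt_mul_of_pos_left hk hp,
    mul_le_mul_of_nonneg_left hc (sq_nonneg σ),
    mul_le_mul_of_nonneg_left hs (le_of_lt (mul_pos hσ hν)),
    mul_le_mul_of_nonneg_left he (sq_nonneg ν)]

private lemma caseA (σ ν t : ℝ) (hσ : 0 < σ) (hν : 0 < ν) (ht : 0 < t)
    (hA : 1 ≤ t * Real.sqrt (σ ^ 2 + ν ^ 2)) :
    σ ^ 2 * Real.cos (t * ν) + σ * ν * Real.sin (t * ν) + ν ^ 2 * Real.exp (-(t * σ))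
      < σ ^ 2 + ν ^ 2 := by
  set r := Real.sqrt (σ ^ 2 + ν ^ 2) with hrdef
  have hr2 : r ^ 2 = σ ^ 2 + ν ^ 2 := Real.sq_sqrt (by positivity)
  have hr : 0 < r := Real.sqrt_pos.mpr (by positivity)
  have hrσ : σ < r := by nlinarith
  have htrig : σ * Real.cos (t * ν) + ν * Real.sin (t * ν) ≤ r := by
    have h1 := Real.sin_sq_add_cos_sq (t * ν)
    nlinarith [sq_nonneg (σ * Real.sin (t * ν) - ν * Real.cos (t * ν)),
      sq_nonneg (σ * Real.cos (t * ν) + ν * Real.sin (t * ν) - r)]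
  have hE : (1 + t * σ) * Real.exp (-(t * σ)) < 1 := by
    have h1 : t * σ + 1 < Real.exp (t * σ) := Real.add_one_lt_exp (mul_pos ht hσ).ne'
    have h2 : Real.exp (t * σ) * Real.exp (-(t * σ)) = 1 := by
      rw [← Real.exp_add]; simp
    have h3 : 0 < Real.exp (-(t * σ)) := Real.exp_pos _
    nlinarith
  have hEpos : 0 < Real.exp (-(t * σ)) := Real.exp_pos _
  have hyr : σ ≤ t * σ * r := by
    calc σ = σ * 1 := by ring
    _ ≤ σ * (t * r) := by nlinarith
    _ = t * σ * r := by ring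
  have key : ν ^ 2 * Real.exp (-(t * σ)) < r * (r - σ) := by
    have h4 : ν ^ 2 ≤ r * (r - σ) * (1 + t * σ) := by nlinarith
    have hrr : 0 < r * (r - σ) := by nlinarith
    nlinarith [mul_le_mul_of_nonneg_right h4 hEpos.le, mul_lt_mul_of_pos_left hE hrr]
  nlinarith [mul_le_mul_of_nonneg_left htrig hσ.le]

/-- For `σ, ν > 0` and `G(s) = σ²cos(sν) - σν sin(sν) + ν²e^{sσ}`,
`G(s) < G(0)` for all `s < 0`. -/
theorem stmt3 (σ ν : ℝ) (hσ : 0 < σ) (hν : 0 < ν) (G : ℝ → ℝ)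
    (hG : ∀ s, G s = σ ^ 2 * Real.cos (s * ν) - σ * ν * Real.sin (s * ν) +
      ν ^ 2 * Real.exp (s * σ)) :
    ∀ s < 0, G s < G 0 := by
  intro s hs
  rw [hG s, hG 0]
  simp only [zero_mul, Real.cos_zero, Real.sin_zero, Real.exp_zero, mul_one, mul_zero, sub_zero]
  set t : ℝ := -s with htdef
  have ht : 0 < t := by simpa [htdef] using hs
  have hsν : s * ν = -(t * ν) := by rw [htdef]; ring
  have hsσ : s * σ = -(t * σ) := by rw [htdef]; ring
  rw [hsν, hsσ, Real.cos_neg, Real.sin_neg]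
  have main : σ ^ 2 * Real.cos (t * ν) + σ * ν * Real.sin (t * ν)
      + ν ^ 2 * Real.exp (-(t * σ)) < σ ^ 2 + ν ^ 2 := by
    rcases le_total (t * Real.sqrt (σ ^ 2 + ν ^ 2)) 1 with h | h
    · have h1 : t * ν ≤ 1 := by
        have : ν ≤ Real.sqrt (σ ^ 2 + ν ^ 2) := by
          nlinarith [Real.sq_sqrt (show (0:ℝ) ≤ σ ^ 2 + ν ^ 2 by positivity),
            Real.sqrt_nonneg (σ ^ 2 + ν ^ 2), sq_nonneg σ]
        nlinarith
      have h2 : t * σ ≤ 1 := by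
        have : σ ≤ Real.sqrt (σ ^ 2 + ν ^ 2) := by
          nlinarith [Real.sq_sqrt (show (0:ℝ) ≤ σ ^ 2 + ν ^ 2 by positivity),
            Real.sqrt_nonneg (σ ^ 2 + ν ^ 2), sq_nonneg ν]
        nlinarith
      exact caseB σ ν t hσ hν ht h1 h2
    · exact caseA σ ν t hσ hν ht h
  linarith
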